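/- For every m ≥ 2 and path-connected metric spaces X and Y, max{dTC_m(X), dTC_m(Y)} ≤ dTC_m(X × Y). -/

import Mathlib

open MeasureTheory unitInterval

noncomputable section

/-- The path space `P(X) = C([0,1], X)` with the compact-open topology. -/
abbrev PathSp (X : Type*) [TopologicalSpace X] : Type _ := C(unitInterval, X)

/-- The space `B_n(Z)` of probability measures on a metric space `Z` supported on at most
`n` points, as a subspace of the space of probability measures with the Lévy–Prokhorov metric. -/
def Bmeas (n : ℕ) (Z : Type*) [MetricSpace Z] : Type _ :=
  letI : MeasurableSpace Z := borel Z
  {μ : LevyProkhorov (ProbabilityMeasure Z) //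
    ∃ S : Finset Z, S.card ≤ n ∧ (LevyProkhorov.toMeasureEquiv μ : ProbabilityMeasure Z) (↑S : Set Z) = 1}

noncomputable instance (n : ℕ) (Z : Type*) [MetricSpace Z] : TopologicalSpace (Bmeas n Z) :=
  letI : MeasurableSpace Z := borel Z
  haveI : BorelSpace Z := ⟨rfl⟩
  instTopologicalSpaceSubtype

/-- The underlying probability measure of an element of `B_n(Z)`. -/
def Bmeas.meas {n : ℕ} {Z : Type*} [MetricSpace Z] (μ : Bmeas n Z) :
    @ProbabilityMeasure Z (borel Z) :=
  LevyProkhorov.toMeasureEquiv μ.1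

/-- `μ ∈ B_n(Z)` is supported on the set `A`. -/
def DistributedOn {Z : Type*} [MetricSpace Z] {n : ℕ} (μ : Bmeas n Z) (A : Set Z) : Prop :=
  ∃ S : Finset Z, (↑S : Set Z) ⊆ A ∧ Bmeas.meas μ (↑S : Set Z) = 1

/-- The time points `t_j = j/(m-1)`, `j = 0, …, m-1`, in `[0,1]`. -/
def tpt (m : ℕ) (j : Fin m) : unitInterval :=
  Set.projIcc 0 1 zero_le_one ((j : ℝ) / ((m : ℝ) - 1))

/-- A `k`-distributed `m`-navigation algorithm on `X`. -/
def IsNavAlg (m k : ℕ) {X : Type*} [MetricSpace X]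
    (s : (Fin m → X) → Bmeas k (PathSp X)) : Prop :=
  Continuous s ∧ ∀ x : Fin m → X,
    DistributedOn (s x) {φ : PathSp X | ∀ j : Fin m, φ (tpt m j) = x j}

/-- The `m`-th sequential distributional topological complexity. -/
noncomputable def dTC (m : ℕ) (X : Type*) [MetricSpace X] : ℕ∞ :=
  sInf {c : ℕ∞ | ∃ k : ℕ, c = k ∧
    ∃ s : (Fin m → X) → Bmeas (k + 1) (PathSp X), IsNavAlg m (k + 1) s}

/-- A `k`-contraction of `Y` to the point `y₀`. -/
def IsContr (k : ℕ) {Y : Type*} [MetricSpace Y] (y₀ : Y)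
    (H : Y → Bmeas k (PathSp Y)) : Prop :=
  Continuous H ∧ ∀ y : Y,
    DistributedOn (H y) {φ : PathSp Y | φ 0 = y ∧ φ 1 = y₀}

/-- The distributional Lusternik–Schnirelmann category. -/
noncomputable def dcat (Y : Type*) [MetricSpace Y] : ℕ∞ :=
  sInf {c : ℕ∞ | ∃ k : ℕ, c = k ∧
    ∃ (y₀ : Y) (H : Y → Bmeas (k + 1) (PathSp Y)), IsContr (k + 1) y₀ H}

/-- The classical `m`-th sequential topological complexity. -/
noncomputable def TCcl (m : ℕ) (X : Type*) [TopologicalSpace X] : ℕ∞ :=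
  sInf {c : ℕ∞ | ∃ k : ℕ, c = k ∧
    ∃ (U : Fin (k + 1) → Set (Fin m → X)) (s : ∀ i : Fin (k + 1), C(U i, PathSp X)),
      (∀ i, IsOpen (U i)) ∧ (∀ x, ∃ i, x ∈ U i) ∧
      ∀ (i : Fin (k + 1)) (x : U i) (j : Fin m), (s i x) (tpt m j) = (x : Fin m → X) j}

section AuxPush

open Metric

variable {Z W : Type*} [MetricSpace Z] [MetricSpace W]

lemma lpEDist_map_le [MeasurableSpace Z] [BorelSpace Z] [MeasurableSpace W] [BorelSpace W]
    {f : Z → W} (hf : LipschitzWith 1 f) (μ ν : Measure Z) :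
    levyProkhorovEDist (μ.map f) (ν.map f) ≤ levyProkhorovEDist μ ν := by
  have hfm : Measurable f := hf.continuous.measurable
  refine sInf_le_sInf ?_
  intro ε hε B hB
  have hsub : ∀ (ρ : Measure Z),
      ρ (thickening ε.toReal (f ⁻¹' B)) ≤ ρ (f ⁻¹' thickening ε.toReal B) := by
    intro ρ
    apply measure_mono
    intro z hz
    rw [mem_thickening_iff] at hz
    obtain ⟨z', hz', hd⟩ := hz
    rw [Set.mem_preimage, mem_thickening_iff]
    exact ⟨f z', hz', lt_of_le_of_lt (by simpa using hf.dist_le_mul z z') hd⟩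
  obtain ⟨h1, h2⟩ := hε (f ⁻¹' B) (hfm hB)
  rw [Measure.map_apply hfm hB, Measure.map_apply hfm hB,
    Measure.map_apply hfm isOpen_thickening.measurableSet,
    Measure.map_apply hfm isOpen_thickening.measurableSet]
  exact ⟨h1.trans (add_le_add_left (hsub ν) ε), h2.trans (add_le_add_left (hsub μ) ε)⟩

/-- Pushforward of an at-most-`n`-point-supported probability measure along a `1`-Lipschitz
map. -/
noncomputable def Bmeas.push {n : ℕ} {f : Z → W} (hf : LipschitzWith 1 f)
    (μ : Bmeas n Z) : Bmeas n W :=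
  letI : MeasurableSpace Z := borel Z
  haveI : BorelSpace Z := ⟨rfl⟩
  letI : MeasurableSpace W := borel W
  haveI : BorelSpace W := ⟨rfl⟩
  ⟨LevyProkhorov.toMeasureEquiv.symm
      ((Bmeas.meas μ).map hf.continuous.measurable.aemeasurable), by
    classical
    obtain ⟨S, hcard, hS⟩ := μ.2
    refine ⟨S.image f, le_trans (Finset.card_image_le) hcard, ?_⟩
    have hAm : MeasurableSet (↑(S.image f) : Set W) :=
      (S.image f).finite_toSet.isClosed.measurableSet
    have hmap : ((Bmeas.meas μ).map hf.continuous.measurable.aemeasurable)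
        (↑(S.image f) : Set W) = (Bmeas.meas μ) (f ⁻¹' ↑(S.image f)) :=
      ProbabilityMeasure.map_apply _ _ hAm
    have hsub : (↑S : Set Z) ⊆ f ⁻¹' ↑(S.image f) := by
      intro z hz
      simp only [Set.mem_preimage, Finset.coe_image, Set.mem_image]
      exact ⟨z, hz, rfl⟩
    refine le_antisymm (ProbabilityMeasure.apply_le_one _ _) ?_
    rw [Equiv.apply_symm_apply, hmap, ← hS]
    exact ProbabilityMeasure.apply_mono _ hsub⟩

lemma Bmeas.push_meas {n : ℕ} {f : Z → W} (hf : LipschitzWith 1 f) (μ : Bmeas n Z) :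
    letI : MeasurableSpace Z := borel Z
    haveI : BorelSpace Z := ⟨rfl⟩
    letI : MeasurableSpace W := borel W
    haveI : BorelSpace W := ⟨rfl⟩
    Bmeas.meas (Bmeas.push hf μ)
      = (Bmeas.meas μ).map hf.continuous.measurable.aemeasurable := rfl

lemma Bmeas.push_meas_image [DecidableEq W] {n : ℕ} {f : Z → W} (hf : LipschitzWith 1 f) (μ : Bmeas n Z)
    (S : Finset Z) (hS : Bmeas.meas μ (↑S : Set Z) = 1) :
    letI : MeasurableSpace Z := borel Z
    haveI : BorelSpace Z := ⟨rfl⟩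
    letI : MeasurableSpace W := borel W
    haveI : BorelSpace W := ⟨rfl⟩
    Bmeas.meas (Bmeas.push hf μ) (↑(S.image f) : Set W) = 1 := by
  letI : MeasurableSpace Z := borel Z
  haveI : BorelSpace Z := ⟨rfl⟩
  letI : MeasurableSpace W := borel W
  haveI : BorelSpace W := ⟨rfl⟩
  classical
  have hAm : MeasurableSet (↑(S.image f) : Set W) :=
    (S.image f).finite_toSet.isClosed.measurableSet
  have hmap : Bmeas.meas (Bmeas.push hf μ) (↑(S.image f) : Set W)
      = (Bmeas.meas μ) (f ⁻¹' ↑(S.image f)) :=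
    ProbabilityMeasure.map_apply (Bmeas.meas μ)
      hf.continuous.measurable.aemeasurable hAm
  have hsub : (↑S : Set Z) ⊆ f ⁻¹' ↑(S.image f) := by
    intro z hz
    simp only [Set.mem_preimage, Finset.coe_image, Set.mem_image]
    exact ⟨z, hz, rfl⟩
  refine le_antisymm (ProbabilityMeasure.apply_le_one _ _) ?_
  rw [hmap, ← hS]
  exact ProbabilityMeasure.apply_mono _ hsub

lemma Bmeas.continuous_push {n : ℕ} {f : Z → W} (hf : LipschitzWith 1 f) :
    Continuous (Bmeas.push (n := n) hf) := by
  letI : MeasurableSpace Z := borel Z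
  haveI : BorelSpace Z := ⟨rfl⟩
  letI : MeasurableSpace W := borel W
  haveI : BorelSpace W := ⟨rfl⟩
  apply Continuous.subtype_mk
  have key : LipschitzWith 1 (fun μ : LevyProkhorov (ProbabilityMeasure Z) =>
      (LevyProkhorov.toMeasureEquiv.symm
        (((LevyProkhorov.toMeasureEquiv μ)).map
          hf.continuous.measurable.aemeasurable) :
        LevyProkhorov (ProbabilityMeasure W))) := by
    apply LipschitzWith.of_dist_le_mul
    intro μ ν
    rw [NNReal.coe_one, one_mul, LevyProkhorov.dist_probabilityMeasure_def, LevyProkhorov.dist_probabilityMeasure_def]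
    show levyProkhorovDist
        (((LevyProkhorov.toMeasureEquiv μ).map
          hf.continuous.measurable.aemeasurable).toMeasure)
        (((LevyProkhorov.toMeasureEquiv ν).map
          hf.continuous.measurable.aemeasurable).toMeasure) ≤ _
    rw [ProbabilityMeasure.toMeasure_map, ProbabilityMeasure.toMeasure_map]
    exact ENNReal.toReal_mono (levyProkhorovEDist_ne_top _ _) (lpEDist_map_le hf _ _)
  exact key.continuous.comp continuous_subtype_val

/-- Transfer of navigation algorithms along a `1`-Lipschitz retraction. -/
lemma navAlg_transfer (m k : ℕ) (e : W → Z) (he : Continuous e)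
    (r : Z → W) (hr : LipschitzWith 1 r) (hre : ∀ w, r (e w) = w)
    (s : (Fin m → Z) → Bmeas k (PathSp Z)) (hs : IsNavAlg m k s) :
    ∃ s' : (Fin m → W) → Bmeas k (PathSp W), IsNavAlg m k s' := by
  classical
  have hg : LipschitzWith 1 (fun φ : PathSp Z =>
      (ContinuousMap.mk r hr.continuous).comp φ) := by
    apply LipschitzWith.of_dist_le_mul
    intro φ ψ
    rw [NNReal.coe_one, one_mul, ContinuousMap.dist_le dist_nonneg]
    intro t
    exact le_trans (by simpa using hr.dist_le_mul (φ t) (ψ t))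
      (ContinuousMap.dist_apply_le_dist t)
  set g : PathSp Z → PathSp W := fun φ => (ContinuousMap.mk r hr.continuous).comp φ with hgdef
  refine ⟨fun w => Bmeas.push hg (s (fun j => e (w j))), ?_, ?_⟩
  · exact (Bmeas.continuous_push hg).comp
      (hs.1.comp (continuous_pi fun j => he.comp (continuous_apply j)))
  · intro w
    obtain ⟨S, hSsub, hS1⟩ := hs.2 (fun j => e (w j))
    refine ⟨S.image g, ?_, ?_⟩
    · intro ψ hψ
      simp only [Finset.coe_image, Set.mem_image] at hψ
      obtain ⟨φ, hφ, rfl⟩ := hψ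
      intro j
      have := hSsub hφ j
      simp only [hgdef, ContinuousMap.comp_apply, ContinuousMap.coe_mk]
      rw [this, hre]
    · exact Bmeas.push_meas_image hg _ S hS1

end AuxPush

/-- For every `m ≥ 2` and path-connected metric spaces `X`, `Y`,
`max (dTC_m X) (dTC_m Y) ≤ dTC_m (X × Y)`. -/
theorem max_dTC_le_dTC_prod (m : ℕ) (hm : 2 ≤ m) (X Y : Type) [MetricSpace X] [MetricSpace Y]
    [PathConnectedSpace X] [PathConnectedSpace Y] :
    max (dTC m X) (dTC m Y) ≤ dTC m (X × Y) := by
  obtain ⟨y₀⟩ : Nonempty Y := PathConnectedSpace.nonempty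
  obtain ⟨x₀⟩ : Nonempty X := PathConnectedSpace.nonempty
  apply max_le
  · apply sInf_le_sInf
    rintro c ⟨k, rfl, s, hs⟩
    obtain ⟨s', hs'⟩ := navAlg_transfer m (k + 1) (fun x : X => (x, y₀))
      (continuous_id.prodMk continuous_const) Prod.fst LipschitzWith.prod_fst
      (fun _ => rfl) s hs
    exact ⟨k, rfl, s', hs'⟩
  · apply sInf_le_sInf
    rintro c ⟨k, rfl, s, hs⟩
    obtain ⟨s', hs'⟩ := navAlg_transfer m (k + 1) (fun y : Y => (x₀, y))
      (continuous_const.prodMk continuous_id) Prod.snd LipschitzWith.prod_snd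
      (fun _ => rfl) s hs
    exact ⟨k, rfl, s', hs'⟩
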